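/- Let E be a finite-dimensional real normed space with basis e₁, …, e_n, and let f : E → ℝ be convex with f(0) = 0. Suppose that for each i, f(t·e_i) = o(t) as t → 0⁺ and f(−t·e_i) = o(t) as t → 0⁺ (i.e. f(t·e_i)/|t| → 0 as t → 0 for every basis vector, in both directions). Then f is differentiable at 0 with derivative 0; equivalently, f(x) = o(‖x‖) as x → 0. -/

import Mathlib

open Filter Topology

/-- A convex function vanishing at `0` whose restriction to each basis direction is
`o(t)` at `0` is differentiable at `0` with derivative `0`. -/
theorem stmt_14 {E : Type*} [NormedAddCommGroup E] [NormedSpace ℝ E]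
    [FiniteDimensional ℝ E] {n : ℕ} (b : Module.Basis (Fin n) ℝ E)
    (f : E → ℝ) (hconv : ConvexOn ℝ Set.univ f) (hf0 : f 0 = 0)
    (ho : ∀ i : Fin n,
      Tendsto (fun t : ℝ => f (t • b i) / |t|) (𝓝[≠] (0:ℝ)) (𝓝 0)) :
    HasFDerivAt f (0 : E →L[ℝ] ℝ) 0 := by
  rcases Nat.eq_zero_or_pos n with hn | hn
  · -- trivial case : `E` is the zero space
    have hE : ∀ x : E, x = 0 := by
      intro x
      apply b.equivFun.injective
      subst hn
      ext i
      exact i.elim0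
    have hfz : f = fun _ => (0 : ℝ) := funext fun x => by rw [hE x, hf0]
    rw [hfz]
    exact hasFDerivAt_const 0 0
  · -- coordinate bound
    set g : E →L[ℝ] (Fin n → ℝ) :=
      LinearMap.toContinuousLinearMap (b.equivFun : E →ₗ[ℝ] (Fin n → ℝ)) with hg
    set C : ℝ := ‖g‖ + 1 with hCdef
    have hC0 : 0 < C := by positivity
    have hC : ∀ (x : E) (i : Fin n), |b.equivFun x i| ≤ C * ‖x‖ := by
      intro x i
      calc |b.equivFun x i| = ‖g x i‖ := rfl
        _ ≤ ‖g x‖ := norm_le_pi_norm (g x) i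
        _ ≤ ‖g‖ * ‖x‖ := g.le_opNorm x
        _ ≤ C * ‖x‖ := by nlinarith [norm_nonneg x]
    have hn0 : (0:ℝ) < (n:ℝ) := by exact_mod_cast hn
    -- the key one-sided estimate
    have upper : ∀ ε : ℝ, 0 < ε → ∃ δ > (0:ℝ), ∀ x : E, ‖x‖ ≤ δ → f x ≤ ε * ‖x‖ := by
      intro ε hε
      set ε' : ℝ := ε / (n * C) with hε'def
      have hε' : 0 < ε' := by positivity
      have key : ∀ᶠ t in 𝓝[≠] (0:ℝ), ∀ i, |f (t • b i)| ≤ ε' * |t| := by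
        rw [eventually_all]
        intro i
        filter_upwards [Metric.tendsto_nhds.mp (ho i) ε' hε', self_mem_nhdsWithin]
          with t ht ht0
        have h0 : (0:ℝ) < |t| := abs_pos.mpr ht0
        rw [Real.dist_eq, sub_zero, abs_div, abs_abs, div_lt_iff₀ h0] at ht
        exact le_of_lt ht
      obtain ⟨δ, hδ0, hδ⟩ := Metric.mem_nhdsWithin_iff.mp key
      have hδ' : ∀ t : ℝ, |t| < δ → ∀ i, |f (t • b i)| ≤ ε' * |t| := by
        intro t ht i
        rcases eq_or_ne t 0 with rfl | h0
        · simp [hf0]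
        · exact hδ ⟨by simpa [Real.dist_eq] using ht, h0⟩ i
      refine ⟨δ / (2 * n * C), by positivity, ?_⟩
      intro x hx
      set w : Fin n → ℝ := fun _ => (1 : ℝ) / n with hw
      set p : Fin n → E := fun i => ((n : ℝ) * b.equivFun x i) • b i with hp
      have hxsum : x = ∑ i, w i • p i := by
        have h1 : ∀ i ∈ Finset.univ, w i • p i = b.equivFun x i • b i := by
          intro i _
          rw [hw, hp, smul_smul]
          congr 1
          field_simp
        rw [Finset.sum_congr rfl h1, b.sum_equivFun]
      have hw0 : ∀ i ∈ Finset.univ, (0:ℝ) ≤ w i := fun i _ => by positivity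
      have hw1 : ∑ i : Fin n, w i = 1 := by
        rw [hw]
        simp [Finset.sum_const, Finset.card_univ]
        field_simp
      have hJ := hconv.map_sum_le hw0 hw1 (fun i _ => Set.mem_univ (p i))
      rw [← hxsum] at hJ
      simp only [smul_eq_mul] at hJ
      have hterm : ∀ i ∈ Finset.univ, w i * f (p i) ≤ (1/n) * (ε' * ((n:ℝ) * (C * ‖x‖))) := by
        intro i _
        have habs : |(n : ℝ) * b.equivFun x i| < δ := by
          have h1 : |(n : ℝ) * b.equivFun x i| ≤ (n:ℝ) * (C * ‖x‖) := by
            rw [abs_mul, abs_of_nonneg hn0.le]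
            exact mul_le_mul_of_nonneg_left (hC x i) hn0.le
          have h2 : (n:ℝ) * (C * ‖x‖) ≤ (n:ℝ) * (C * (δ / (2 * n * C))) :=
            mul_le_mul_of_nonneg_left (mul_le_mul_of_nonneg_left hx hC0.le) hn0.le
          have h3 : (n:ℝ) * (C * (δ / (2 * n * C))) = δ / 2 := by field_simp
          calc |(n : ℝ) * b.equivFun x i| ≤ (n:ℝ) * (C * ‖x‖) := h1
            _ ≤ δ / 2 := by rw [← h3]; exact h2
            _ < δ := by linarith
        have h4 := hδ' _ habs i
        have h5 : f (p i) ≤ ε' * ((n:ℝ) * (C * ‖x‖)) := by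
          have h6 : f (p i) ≤ |f (p i)| := le_abs_self _
          have h7 : |(n : ℝ) * b.equivFun x i| ≤ (n:ℝ) * (C * ‖x‖) := by
            rw [abs_mul, abs_of_nonneg hn0.le]
            exact mul_le_mul_of_nonneg_left (hC x i) hn0.le
          calc f (p i) ≤ |f (p i)| := h6
            _ ≤ ε' * |(n : ℝ) * b.equivFun x i| := h4
            _ ≤ ε' * ((n:ℝ) * (C * ‖x‖)) := mul_le_mul_of_nonneg_left h7 hε'.le
        rw [hw]
        have : (0:ℝ) ≤ 1/n := by positivity
        exact mul_le_mul_of_nonneg_left h5 this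
      have hsum : ∑ i : Fin n, w i * f (p i) ≤ (n:ℝ) * ((1/n) * (ε' * ((n:ℝ) * (C * ‖x‖)))) := by
        calc ∑ i : Fin n, w i * f (p i)
            ≤ ∑ _i : Fin n, (1/n) * (ε' * ((n:ℝ) * (C * ‖x‖))) := Finset.sum_le_sum hterm
          _ = (n:ℝ) * ((1/n) * (ε' * ((n:ℝ) * (C * ‖x‖)))) := by
              simp [Finset.sum_const, Finset.card_univ]
      have heq : (n:ℝ) * ((1/n) * (ε' * ((n:ℝ) * (C * ‖x‖)))) = ε * ‖x‖ := by
        rw [hε'def]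
        field_simp
      linarith [hJ, hsum]
    -- conclude
    rw [hasFDerivAt_iff_isLittleO_nhds_zero]
    rw [Asymptotics.isLittleO_iff]
    intro c hc
    obtain ⟨δ, hδ0, hδ⟩ := upper c hc
    filter_upwards [Metric.ball_mem_nhds (0:E) hδ0] with x hx
    have hxδ : ‖x‖ ≤ δ := le_of_lt (by simpa [dist_eq_norm] using hx)
    have h1 : f x ≤ c * ‖x‖ := hδ x hxδ
    have h2 : f (-x) ≤ c * ‖x‖ := by simpa using hδ (-x) (by simpa)
    have h3 : (0:ℝ) ≤ f x + f (-x) := by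
      have h0 : (1/2 : ℝ) • x + (1/2 : ℝ) • (-x) = 0 := by
        rw [smul_neg]
        exact add_neg_cancel _
      have := hconv.2 (Set.mem_univ x) (Set.mem_univ (-x))
        (by norm_num : (0:ℝ) ≤ 1/2) (by norm_num : (0:ℝ) ≤ 1/2) (by norm_num)
      rw [h0, hf0] at this
      simp only [smul_eq_mul] at this
      linarith
    simp only [zero_add, hf0, sub_zero, ContinuousLinearMap.zero_apply,
      Real.norm_eq_abs]
    rw [abs_le]
    constructor
    · linarith
    · linarith
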